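/- The number of complete Gessel words of length 2n with exactly one 1 and one 1bar, in which the 1 occurs before the 1bar, equals (2n-1) * binomial(2n-2, n-1). -/

import Mathlib

/-- The alphabet of Gessel words: letters `1`, `2`, `1̄`, `2̄`. -/
inductive GLetter | one | two | onebar | twobar
deriving DecidableEq

instance : Fintype GLetter where
  elems := {.one, .two, .onebar, .twobar}
  complete := by intro x; cases x <;> simp

open Classical

/-- Number of occurrences of the letter `x` among the first `k` letters of `w`. -/
noncomputable def cnt (m : ℕ) (w : Fin m → GLetter) (x : GLetter) (k : ℕ) : ℕ :=
  (Finset.univ.filter (fun i : Fin m => (i : ℕ) < k ∧ w i = x)).card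

/-- Gessel word condition: every prefix has `N₂ ≥ N_{2̄}` and `N₁+N₂ ≥ N_{1̄}+N_{2̄}`. -/
def IsGessel (m : ℕ) (w : Fin m → GLetter) : Prop :=
  ∀ k ≤ m, cnt m w .twobar k ≤ cnt m w .two k ∧
    cnt m w .onebar k + cnt m w .twobar k ≤ cnt m w .one k + cnt m w .two k

/-- Complete: equally many occurrences of each letter and its bar. -/
def IsCompleteGW (m : ℕ) (w : Fin m → GLetter) : Prop :=
  cnt m w .one m = cnt m w .onebar m ∧ cnt m w .two m = cnt m w .twobar m

/-! ### Auxiliary index arithmetic -/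

def natIdx (a b l : ℕ) : ℕ := l - (if a < l then 1 else 0) - (if b < l then 1 else 0)
def natUnidx (a b t : ℕ) : ℕ := t + (if a ≤ t then 1 else 0) + (if b ≤ t + 1 then 1 else 0)

lemma natUnidx_natIdx {a b l : ℕ} (hab : a < b) (ha : l ≠ a) (hb : l ≠ b) :
    natUnidx a b (natIdx a b l) = l := by unfold natIdx natUnidx; split_ifs <;> omega
lemma natUnidx_ne {a b t : ℕ} (hab : a < b) : natUnidx a b t ≠ a ∧ natUnidx a b t ≠ b := by
  unfold natUnidx; split_ifs <;> omega
lemma natIdx_natUnidx {a b t : ℕ} (hab : a < b) : natIdx a b (natUnidx a b t) = t := by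
  unfold natIdx natUnidx; split_ifs <;> omega
lemma natIdx_lt_iff {a b l k : ℕ} (hab : a < b) (ha : l ≠ a) (hb : l ≠ b) :
    natIdx a b l < natIdx a b k ↔ l < k := by unfold natIdx; split_ifs <;> omega
lemma natIdx_lt {a b l N : ℕ} (hab : a < b) (hbN : b < N) (ha : l ≠ a) (hb : l ≠ b)
    (hl : l < N) : natIdx a b l < N - 2 := by unfold natIdx; split_ifs <;> omega
lemma natUnidx_lt {a b t N : ℕ} (hab : a < b) (hbN : b < N) (ht : t < N - 2) :
    natUnidx a b t < N := by unfold natUnidx; split_ifs <;> omega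
lemma natIdx_le {a b k N : ℕ} (hab : a < b) (hbN : b < N) (hk : k ≤ N) :
    natIdx a b k ≤ N - 2 := by unfold natIdx; split_ifs <;> omega
lemma natIdx_top {a b N : ℕ} (hab : a < b) (hbN : b < N) : natIdx a b N = N - 2 := by
  unfold natIdx; split_ifs <;> omega
lemma natIdx_surj {a b N r : ℕ} (hab : a < b) (hbN : b < N) (hr : r ≤ N - 2) :
    ∃ k ≤ N, natIdx a b k = r := by
  rcases eq_or_lt_of_le hr with h | h
  · exact ⟨N, le_rfl, h ▸ natIdx_top hab hbN⟩
  · exact ⟨natUnidx a b r, (natUnidx_lt hab hbN h).le, natIdx_natUnidx hab⟩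

/-! ### Dyck step vectors and their count -/

open DyckStep

instance : Fintype DyckStep :=
  ⟨⟨{U, D}, by decide⟩, fun x => by cases x <;> decide⟩

noncomputable def dcnt (M : ℕ) (v : Fin M → DyckStep) (x : DyckStep) (r : ℕ) : ℕ :=
  (Finset.univ.filter (fun t : Fin M => (t : ℕ) < r ∧ v t = x)).card

lemma dcnt_eq_count_take (M : ℕ) (v : Fin M → DyckStep) (x : DyckStep) (k : ℕ) :
    dcnt M v x k = ((List.ofFn v).take k).count x := by
  induction k with
  | zero => simp [dcnt]
  | succ k ih =>
    rw [List.take_succ, List.count_append, ← ih]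
    unfold dcnt
    by_cases hk : k < M
    · have hsplit : (Finset.univ.filter (fun t : Fin M => (t : ℕ) < k + 1 ∧ v t = x))
          = (Finset.univ.filter (fun t : Fin M => (t : ℕ) < k ∧ v t = x)) ∪
            (Finset.univ.filter (fun t : Fin M => (t : ℕ) = k ∧ v t = x)) := by
        ext t; simp only [Finset.mem_filter, Finset.mem_union, Finset.mem_univ, true_and]
        constructor
        · rintro ⟨h1, h2⟩; rcases Nat.lt_succ_iff_lt_or_eq.mp h1 with h | h
          · exact Or.inl ⟨h, h2⟩
          · exact Or.inr ⟨h, h2⟩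
        · rintro (⟨h1, h2⟩ | ⟨h1, h2⟩) <;> exact ⟨by omega, h2⟩
      rw [hsplit, Finset.card_union_of_disjoint]
      · congr 1
        have hget : (List.ofFn v)[k]? = some (v ⟨k, hk⟩) := by
          rw [List.getElem?_eq_getElem (by simpa using hk)]
          simp
        rw [hget]
        by_cases hv : v ⟨k, hk⟩ = x
        · have : (Finset.univ.filter (fun t : Fin M => (t : ℕ) = k ∧ v t = x)) = {⟨k, hk⟩} := by
            ext t; simp only [Finset.mem_filter, Finset.mem_univ, true_and, Finset.mem_singleton]
            constructor
            · rintro ⟨h1, h2⟩; exact Fin.ext h1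
            · rintro rfl; exact ⟨rfl, hv⟩
          simp [this, hv]
        · have : (Finset.univ.filter (fun t : Fin M => (t : ℕ) = k ∧ v t = x)) = ∅ := by
            ext t; simp only [Finset.mem_filter, Finset.mem_univ, true_and,
              Finset.notMem_empty, iff_false, not_and]
            rintro h1; have : t = (⟨k, hk⟩ : Fin M) := Fin.ext h1
            rw [this]; exact hv
          simp [this, List.count_singleton, hv]
      · rw [Finset.disjoint_left]
        rintro t ht1 ht2
        simp only [Finset.mem_filter] at ht1 ht2
        omega
    · have hget : (List.ofFn v)[k]? = none := by
        rw [List.getElem?_eq_none]; simpa using hk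
      rw [hget]
      simp only [Option.toList_none, List.count_nil, add_zero]
      congr 1
      apply Finset.filter_congr
      intro t _
      have : (t : ℕ) < M := t.isLt
      constructor
      · rintro ⟨h1, h2⟩; exact ⟨by omega, h2⟩
      · rintro ⟨h1, h2⟩; exact ⟨by omega, h2⟩

lemma dcnt_eq_count (M : ℕ) (v : Fin M → DyckStep) (x : DyckStep) {k : ℕ} (hk : M ≤ k) :
    dcnt M v x k = (List.ofFn v).count x := by
  rw [dcnt_eq_count_take, List.take_of_length_le (by simpa using hk)]

lemma count_U_add_count_D (l : List DyckStep) : l.count U + l.count D = l.length := by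
  induction l with
  | nil => simp
  | cons a l ih => cases a <;> simp [List.count_cons] <;> omega

lemma dcnt_add (M : ℕ) (v : Fin M → DyckStep) : dcnt M v U M + dcnt M v D M = M := by
  rw [dcnt_eq_count M v U le_rfl, dcnt_eq_count M v D le_rfl]
  have := count_U_add_count_D (List.ofFn v)
  simpa using this

/-- the Dyck condition on a DyckStep vector -/
def DyckCond (M : ℕ) (v : Fin M → DyckStep) : Prop :=
  (∀ r ≤ M, dcnt M v D r ≤ dcnt M v U r) ∧ dcnt M v U M = dcnt M v D M

/-- package a Dyck vector into a DyckWord -/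
def toDW (m : ℕ) (v : Fin (2 * m) → DyckStep) (hv : DyckCond (2 * m) v) :
    {p : DyckWord // p.semilength = m} := by
  refine ⟨⟨List.ofFn v, ?_, ?_⟩, ?_⟩
  · have h1 := hv.2
    rwa [dcnt_eq_count _ v U le_rfl, dcnt_eq_count _ v D le_rfl] at h1
  · intro i
    rcases le_or_gt i (2 * m) with h | h
    · have := hv.1 i h
      rwa [dcnt_eq_count_take, dcnt_eq_count_take] at this
    · rw [List.take_of_length_le (by simp; omega)]
      have h2 := hv.2
      have h1 := hv.1 (2 * m) le_rfl
      rw [dcnt_eq_count _ v U le_rfl, dcnt_eq_count _ v D le_rfl] at h1 h2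
      omega
  · show List.count U (List.ofFn v) = m
    have h1 := hv.2
    have h2 := dcnt_add (2 * m) v
    rw [dcnt_eq_count _ v U le_rfl, dcnt_eq_count _ v D le_rfl] at h1 h2
    omega

lemma card_dyckCond (m : ℕ) :
    ((Finset.univ : Finset (Fin (2 * m) → DyckStep)).filter (fun v => DyckCond (2 * m) v)).card
      = catalan m := by
  rw [← DyckWord.card_dyckWord_semilength_eq_catalan m, ← Finset.card_univ]
  refine Finset.card_bij
    (fun v hv => toDW m v (by simpa using (Finset.mem_filter.mp hv).2))
    (fun v hv => Finset.mem_univ _) ?_ ?_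
  · intro v1 hv1 v2 hv2 heq
    have : List.ofFn v1 = List.ofFn v2 := congrArg (fun p => p.1.toList) heq
    exact List.ofFn_injective this
  · rintro ⟨p, hp⟩ _
    have hlen : p.toList.length = 2 * m := by
      rw [← p.two_mul_semilength_eq_length, hp]
    have hofn : List.ofFn (fun t : Fin (2 * m) => p.toList.get ⟨t, by omega⟩) = p.toList := by
      apply List.ext_getElem (by simp [hlen])
      intro i h1 h2
      simp
    refine ⟨fun t : Fin (2 * m) => p.toList.get ⟨t, by omega⟩, ?_, ?_⟩
    · simp only [Finset.mem_filter, Finset.mem_univ, true_and]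
      constructor
      · intro r hr
        rw [dcnt_eq_count_take, dcnt_eq_count_take, hofn]
        exact p.count_D_le_count_U r
      · rw [dcnt_eq_count _ _ U le_rfl, dcnt_eq_count _ _ D le_rfl, hofn]
        exact p.count_U_eq_count_D
    · apply Subtype.ext
      apply DyckWord.ext
      exact hofn

/-! ### Counting pairs -/

lemma card_pairs_two (N : ℕ) :
    ((Finset.univ : Finset (Fin N × Fin N)).filter (fun p => p.1 < p.2)).card * 2
      = N * N - N := by
  have hswap : ((Finset.univ : Finset (Fin N × Fin N)).filter (fun p => p.1 < p.2)).card
      = ((Finset.univ : Finset (Fin N × Fin N)).filter (fun p => p.2 < p.1)).card := by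
    apply Finset.card_nbij' Prod.swap Prod.swap <;>
      simp [Finset.mem_filter, Prod.swap, Set.MapsTo, Set.LeftInvOn, Set.RightInvOn, Set.EqOn]
  have hunion : ((Finset.univ : Finset (Fin N × Fin N)).filter (fun p => p.1 < p.2)) ∪
      ((Finset.univ : Finset (Fin N × Fin N)).filter (fun p => p.2 < p.1))
      = (Finset.univ : Finset (Fin N)).offDiag := by
    ext p
    simp only [Finset.mem_union, Finset.mem_filter, Finset.mem_univ, true_and,
      Finset.mem_offDiag]
    constructor
    · rintro (h | h)
      · exact ne_of_lt h
      · exact ne_of_gt h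
    · exact fun h => lt_or_gt_of_ne h
  have hdisj : Disjoint ((Finset.univ : Finset (Fin N × Fin N)).filter (fun p => p.1 < p.2))
      ((Finset.univ : Finset (Fin N × Fin N)).filter (fun p => p.2 < p.1)) := by
    rw [Finset.disjoint_left]
    intro p hp hq
    simp only [Finset.mem_filter] at hp hq
    exact absurd hq.2 (not_lt_of_gt hp.2)
  have hcard := Finset.card_union_of_disjoint hdisj
  rw [hunion, Finset.offDiag_card, ← hswap] at hcard
  simp only [Finset.card_univ, Fintype.card_fin] at hcard
  omega

lemma card_pairs (n : ℕ) (hn : 1 ≤ n) :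
    ((Finset.univ : Finset (Fin (2 * n) × Fin (2 * n))).filter (fun p => p.1 < p.2)).card
      = n * (2 * n - 1) := by
  obtain ⟨m, rfl⟩ : ∃ m, n = m + 1 := ⟨n - 1, by omega⟩
  have h := card_pairs_two (2 * (m + 1))
  have h2 : 2 * (m + 1) * (2 * (m + 1)) - 2 * (m + 1) = (m + 1) * (2 * (m + 1) - 1) * 2 := by
    have h3 : 2 * (m + 1) - 1 = 2 * m + 1 := by omega
    rw [h3, Nat.sub_eq_iff_eq_add (by nlinarith)]
    ring
  rw [h2] at h
  exact Nat.eq_of_mul_eq_mul_right (by norm_num) h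

/-! ### The word built from a pair of positions and a Dyck vector -/

def toG : DyckStep → GLetter
  | U => .two
  | D => .twobar

lemma toG_injective : Function.Injective toG := by
  intro s t h; cases s <;> cases t <;> simp [toG] at h ⊢

lemma toG_ne_one (s : DyckStep) : toG s ≠ .one := by cases s <;> simp [toG]
lemma toG_ne_onebar (s : DyckStep) : toG s ≠ .onebar := by cases s <;> simp [toG]

noncomputable def mk (N : ℕ) (i j : Fin N) (v : Fin (N - 2) → DyckStep) : Fin N → GLetter :=
  fun k => if k = i then .one else if k = j then .onebar else
    if h : natIdx (i : ℕ) (j : ℕ) (k : ℕ) < N - 2 then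
      toG (v ⟨natIdx (i : ℕ) (j : ℕ) (k : ℕ), h⟩) else .two

lemma mk_apply_i {N : ℕ} {i j : Fin N} {v : Fin (N - 2) → DyckStep} : mk N i j v i = .one := by
  simp [mk]

lemma mk_apply_j {N : ℕ} {i j : Fin N} {v : Fin (N - 2) → DyckStep} (hji : j ≠ i) :
    mk N i j v j = .onebar := by simp [mk, hji]

lemma mk_apply_ne {N : ℕ} {i j : Fin N} {v : Fin (N - 2) → DyckStep} {l : Fin N}
    (hi : l ≠ i) (hj : l ≠ j) (h : natIdx (i : ℕ) (j : ℕ) (l : ℕ) < N - 2) :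
    mk N i j v l = toG (v ⟨natIdx (i : ℕ) (j : ℕ) (l : ℕ), h⟩) := by
  simp [mk, hi, hj, h]

lemma mk_eq_one_iff {N : ℕ} {i j : Fin N} {v : Fin (N - 2) → DyckStep} (hij : i ≠ j)
    (l : Fin N) : mk N i j v l = .one ↔ l = i := by
  constructor
  · intro h
    by_contra hne
    by_cases hlj : l = j
    · subst hlj
      rw [mk_apply_j hij.symm] at h
      exact absurd h (by simp)
    · unfold mk at h
      rw [if_neg hne, if_neg hlj] at h
      split at h
      · exact toG_ne_one _ h
      · exact absurd h (by simp)
  · rintro rfl; exact mk_apply_i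

lemma mk_eq_onebar_iff {N : ℕ} {i j : Fin N} {v : Fin (N - 2) → DyckStep} (hij : i ≠ j)
    (l : Fin N) : mk N i j v l = .onebar ↔ l = j := by
  constructor
  · intro h
    by_contra hne
    by_cases hli : l = i
    · subst hli; rw [mk_apply_i] at h; exact absurd h (by simp)
    · unfold mk at h
      rw [if_neg hli, if_neg hne] at h
      split at h
      · exact toG_ne_onebar _ h
      · exact absurd h (by simp)
  · rintro rfl; exact mk_apply_j hij.symm

lemma cnt_eq_ite {N : ℕ} {w : Fin N → GLetter} {x : GLetter} {i : Fin N}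
    (h : ∀ l, w l = x ↔ l = i) (k : ℕ) :
    cnt N w x k = if (i : ℕ) < k then 1 else 0 := by
  unfold cnt
  split_ifs with hik
  · rw [Finset.card_eq_one]
    refine ⟨i, ?_⟩
    ext l
    simp only [Finset.mem_filter, Finset.mem_univ, true_and, Finset.mem_singleton, h l]
    constructor
    · rintro ⟨-, h2⟩; exact h2
    · rintro rfl; exact ⟨hik, rfl⟩
  · rw [Finset.card_eq_zero]
    ext l
    simp only [Finset.mem_filter, Finset.mem_univ, true_and, Finset.notMem_empty, iff_false,
      not_and, h l]
    rintro h1 rfl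
    exact hik h1

lemma cnt_mk_toG {N : ℕ} {i j : Fin N} (hij : i < j) (v : Fin (N - 2) → DyckStep)
    {g : GLetter} {d : DyckStep} (hg : ∀ s, toG s = g ↔ s = d) (k : ℕ) :
    cnt N (mk N i j v) g k = dcnt (N - 2) v d (natIdx (i : ℕ) (j : ℕ) k) := by
  have hab : (i : ℕ) < (j : ℕ) := hij
  have hbN : (j : ℕ) < N := j.isLt
  have hgone : g ≠ .one := by rw [← (hg d).mpr rfl]; exact toG_ne_one d
  have hgbar : g ≠ .onebar := by rw [← (hg d).mpr rfl]; exact toG_ne_onebar d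
  have hijne : i ≠ j := Fin.ne_of_lt hij
  have hmem : ∀ l : Fin N, mk N i j v l = g → l ≠ i ∧ l ≠ j := by
    intro l hl
    constructor
    · rintro rfl; rw [mk_apply_i] at hl; exact hgone hl.symm
    · rintro rfl; rw [mk_apply_j hijne.symm] at hl; exact hgbar hl.symm
  unfold cnt dcnt
  refine Finset.card_bij (fun l hl =>
    ⟨natIdx (i : ℕ) (j : ℕ) (l : ℕ),
      natIdx_lt hab hbN
        (Fin.val_ne_of_ne (hmem l (Finset.mem_filter.mp hl).2.2).1)
        (Fin.val_ne_of_ne (hmem l (Finset.mem_filter.mp hl).2.2).2) l.isLt⟩)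
    ?_ ?_ ?_
  · intro l hl
    obtain ⟨-, hlk, hlg⟩ := Finset.mem_filter.mp hl
    obtain ⟨h1, h2⟩ := hmem l hlg
    have h1' := Fin.val_ne_of_ne h1
    have h2' := Fin.val_ne_of_ne h2
    simp only [Finset.mem_filter, Finset.mem_univ, true_and]
    constructor
    · exact (natIdx_lt_iff hab h1' h2').mpr hlk
    · rw [mk_apply_ne h1 h2 (natIdx_lt hab hbN h1' h2' l.isLt)] at hlg
      exact (hg _).mp hlg
  · intro l1 hl1 l2 hl2 heq
    have hvv := congrArg Fin.val heq
    simp only at hvv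
    apply Fin.ext
    obtain ⟨-, -, hg1⟩ := Finset.mem_filter.mp hl1
    obtain ⟨-, -, hg2⟩ := Finset.mem_filter.mp hl2
    obtain ⟨ha1, hb1⟩ := hmem l1 hg1
    obtain ⟨ha2, hb2⟩ := hmem l2 hg2
    calc (l1 : ℕ) = natUnidx (i : ℕ) (j : ℕ) (natIdx (i : ℕ) (j : ℕ) (l1 : ℕ)) :=
          (natUnidx_natIdx hab (Fin.val_ne_of_ne ha1) (Fin.val_ne_of_ne hb1)).symm
      _ = natUnidx (i : ℕ) (j : ℕ) (natIdx (i : ℕ) (j : ℕ) (l2 : ℕ)) := by rw [hvv]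
      _ = (l2 : ℕ) := natUnidx_natIdx hab (Fin.val_ne_of_ne ha2) (Fin.val_ne_of_ne hb2)
  · intro t ht
    obtain ⟨-, htk, htd⟩ := Finset.mem_filter.mp ht
    have htlt : (t : ℕ) < N - 2 := t.isLt
    refine ⟨⟨natUnidx (i : ℕ) (j : ℕ) (t : ℕ), natUnidx_lt hab hbN htlt⟩, ?_, ?_⟩
    · have hne := natUnidx_ne (t := (t : ℕ)) hab
      have hni : (⟨natUnidx (i : ℕ) (j : ℕ) (t : ℕ), natUnidx_lt hab hbN htlt⟩ : Fin N) ≠ i :=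
        Fin.ne_of_val_ne hne.1
      have hnj : (⟨natUnidx (i : ℕ) (j : ℕ) (t : ℕ), natUnidx_lt hab hbN htlt⟩ : Fin N) ≠ j :=
        Fin.ne_of_val_ne hne.2
      have hidx : natIdx (i : ℕ) (j : ℕ) (natUnidx (i : ℕ) (j : ℕ) (t : ℕ)) = (t : ℕ) :=
        natIdx_natUnidx hab
      simp only [Finset.mem_filter, Finset.mem_univ, true_and]
      constructor
      · rw [← natIdx_lt_iff hab hne.1 hne.2, hidx]; exact htk
      · rw [mk_apply_ne hni hnj (by rw [hidx]; exact htlt)]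
        apply (hg _).mpr
        convert htd using 2
        exact Fin.ext hidx
    · apply Fin.ext
      exact natIdx_natUnidx hab

lemma toG_eq_two_iff (s : DyckStep) : toG s = .two ↔ s = U := by cases s <;> simp [toG]
lemma toG_eq_twobar_iff (s : DyckStep) : toG s = .twobar ↔ s = D := by cases s <;> simp [toG]

lemma cnt_mk_one {N : ℕ} {i j : Fin N} (hij : i < j) (v : Fin (N - 2) → DyckStep) (k : ℕ) :
    cnt N (mk N i j v) .one k = if (i : ℕ) < k then 1 else 0 :=
  cnt_eq_ite (mk_eq_one_iff (Fin.ne_of_lt hij)) k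

lemma cnt_mk_onebar {N : ℕ} {i j : Fin N} (hij : i < j) (v : Fin (N - 2) → DyckStep) (k : ℕ) :
    cnt N (mk N i j v) .onebar k = if (j : ℕ) < k then 1 else 0 :=
  cnt_eq_ite (mk_eq_onebar_iff (Fin.ne_of_lt hij)) k

lemma cnt_mk_two {N : ℕ} {i j : Fin N} (hij : i < j) (v : Fin (N - 2) → DyckStep) (k : ℕ) :
    cnt N (mk N i j v) .two k = dcnt (N - 2) v U (natIdx (i : ℕ) (j : ℕ) k) :=
  cnt_mk_toG hij v toG_eq_two_iff k

lemma cnt_mk_twobar {N : ℕ} {i j : Fin N} (hij : i < j) (v : Fin (N - 2) → DyckStep) (k : ℕ) :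
    cnt N (mk N i j v) .twobar k = dcnt (N - 2) v D (natIdx (i : ℕ) (j : ℕ) k) :=
  cnt_mk_toG hij v toG_eq_twobar_iff k

lemma mk_inj {N : ℕ} {i j : Fin N} (hij : i < j) {v1 v2 : Fin (N - 2) → DyckStep}
    (h : mk N i j v1 = mk N i j v2) : v1 = v2 := by
  have hab : (i : ℕ) < (j : ℕ) := hij
  have hbN : (j : ℕ) < N := j.isLt
  funext t
  have htlt : (t : ℕ) < N - 2 := t.isLt
  set l : Fin N := ⟨natUnidx (i : ℕ) (j : ℕ) (t : ℕ), natUnidx_lt hab hbN htlt⟩ with hl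
  have hne := natUnidx_ne (t := (t : ℕ)) hab
  have hni : l ≠ i := Fin.ne_of_val_ne hne.1
  have hnj : l ≠ j := Fin.ne_of_val_ne hne.2
  have hidx : natIdx (i : ℕ) (j : ℕ) (l : ℕ) = (t : ℕ) := natIdx_natUnidx hab
  have hidxlt : natIdx (i : ℕ) (j : ℕ) (l : ℕ) < N - 2 := by rw [hidx]; exact htlt
  have hFt : (⟨natIdx (i : ℕ) (j : ℕ) (l : ℕ), hidxlt⟩ : Fin (N - 2)) = t := Fin.ext hidx
  have e1 : mk N i j v1 l = toG (v1 t) := by rw [mk_apply_ne hni hnj hidxlt, hFt]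
  have e2 : mk N i j v2 l = toG (v2 t) := by rw [mk_apply_ne hni hnj hidxlt, hFt]
  apply toG_injective
  rw [← e1, ← e2, h]

lemma card_dyckCond' (M m : ℕ) (h : M = 2 * m) :
    ((Finset.univ : Finset (Fin M → DyckStep)).filter (fun v => DyckCond M v)).card
      = catalan m := by
  subst h; exact card_dyckCond m

/-! ### Main theorem -/

/-- The number of complete Gessel words of length `2n` with exactly one `1` and one `1̄`,
in which the `1` occurs before the `1̄`, is `(2n-1) * C(2n-2, n-1)`. -/
theorem gessel_one_before_onebar (n : ℕ) (hn : 1 ≤ n) :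
    ((Finset.univ : Finset (Fin (2 * n) → GLetter)).filter
      (fun w => IsGessel (2 * n) w ∧ IsCompleteGW (2 * n) w ∧
        cnt (2 * n) w .one (2 * n) = 1 ∧ cnt (2 * n) w .onebar (2 * n) = 1 ∧
        ∃ i j : Fin (2 * n), i < j ∧ w i = .one ∧ w j = .onebar)).card
    = (2 * n - 1) * Nat.choose (2 * n - 2) (n - 1) := by
  obtain ⟨m, rfl⟩ : ∃ m, n = m + 1 := ⟨n - 1, by omega⟩
  have e1 : 2 * (m + 1) - 1 = 2 * m + 1 := by omega
  have e2 : 2 * (m + 1) - 2 = 2 * m := by omega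
  have e3 : m + 1 - 1 = m := by omega
  have key : (((Finset.univ : Finset (Fin (2 * (m + 1)) × Fin (2 * (m + 1)))).filter
        (fun p => p.1 < p.2)) ×ˢ
      ((Finset.univ : Finset (Fin (2 * (m + 1) - 2) → DyckStep)).filter
        (fun v => DyckCond (2 * (m + 1) - 2) v))).card
      = ((Finset.univ : Finset (Fin (2 * (m + 1)) → GLetter)).filter
      (fun w => IsGessel (2 * (m + 1)) w ∧ IsCompleteGW (2 * (m + 1)) w ∧
        cnt (2 * (m + 1)) w .one (2 * (m + 1)) = 1 ∧ cnt (2 * (m + 1)) w .onebar (2 * (m + 1)) = 1 ∧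
        ∃ i j : Fin (2 * (m + 1)), i < j ∧ w i = .one ∧ w j = .onebar)).card := by
    refine Finset.card_bij (fun q _ => mk (2 * (m + 1)) q.1.1 q.1.2 q.2) ?_ ?_ ?_
    · rintro ⟨⟨i, j⟩, v⟩ hq
      dsimp only
      obtain ⟨hq1, hq2⟩ := Finset.mem_product.mp hq
      have hij : i < j := (Finset.mem_filter.mp hq1).2
      have hv : DyckCond (2 * (m + 1) - 2) v := (Finset.mem_filter.mp hq2).2
      have hab : (i : ℕ) < (j : ℕ) := hij
      have hbN : (j : ℕ) < 2 * (m + 1) := j.isLt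
      refine Finset.mem_filter.mpr ⟨Finset.mem_univ _, ?_, ?_, ?_, ?_, ?_⟩
      · intro k hk
        constructor
        · rw [cnt_mk_twobar hij, cnt_mk_two hij]
          exact hv.1 _ (natIdx_le hab hbN hk)
        · rw [cnt_mk_one hij, cnt_mk_onebar hij, cnt_mk_two hij, cnt_mk_twobar hij]
          have h1 := hv.1 _ (natIdx_le hab hbN hk)
          split_ifs <;> omega
      · constructor
        · rw [cnt_mk_one hij, cnt_mk_onebar hij, if_pos i.isLt, if_pos j.isLt]
        · rw [cnt_mk_two hij, cnt_mk_twobar hij, natIdx_top hab hbN]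
          exact hv.2
      · rw [cnt_mk_one hij, if_pos i.isLt]
      · rw [cnt_mk_onebar hij, if_pos j.isLt]
      · exact ⟨i, j, hij, mk_apply_i, mk_apply_j (Fin.ne_of_lt hij).symm⟩
    · rintro ⟨⟨i1, j1⟩, v1⟩ hq1 ⟨⟨i2, j2⟩, v2⟩ hq2 heq
      simp only at heq
      have hij1 : i1 < j1 := (Finset.mem_filter.mp (Finset.mem_product.mp hq1).1).2
      have hij2 : i2 < j2 := (Finset.mem_filter.mp (Finset.mem_product.mp hq2).1).2
      have hi : i1 = i2 := by
        have h1 : mk (2 * (m + 1)) i2 j2 v2 i1 = .one := by rw [← heq]; exact mk_apply_i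
        exact (mk_eq_one_iff (Fin.ne_of_lt hij2) _).mp h1
      have hj : j1 = j2 := by
        have h1 : mk (2 * (m + 1)) i2 j2 v2 j1 = .onebar := by
          rw [← heq]; exact mk_apply_j (Fin.ne_of_lt hij1).symm
        exact (mk_eq_onebar_iff (Fin.ne_of_lt hij2) _).mp h1
      subst hi; subst hj
      rw [mk_inj hij1 heq]
    · intro w hw
      obtain ⟨-, hG, hC, h1, h1b, i', j', hij', hwi', hwj'⟩ := Finset.mem_filter.mp hw
      unfold cnt at h1 h1b
      obtain ⟨i, hiF⟩ := Finset.card_eq_one.mp h1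
      obtain ⟨j, hjF⟩ := Finset.card_eq_one.mp h1b
      have hwi : w i = .one := by
        have hm : i ∈ Finset.univ.filter
            (fun l : Fin (2 * (m + 1)) => (l : ℕ) < 2 * (m + 1) ∧ w l = .one) := by
          rw [hiF]; exact Finset.mem_singleton_self i
        exact (Finset.mem_filter.mp hm).2.2
      have hwj : w j = .onebar := by
        have hm : j ∈ Finset.univ.filter
            (fun l : Fin (2 * (m + 1)) => (l : ℕ) < 2 * (m + 1) ∧ w l = .onebar) := by
          rw [hjF]; exact Finset.mem_singleton_self j
        exact (Finset.mem_filter.mp hm).2.2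
      have huniq1 : ∀ l : Fin (2 * (m + 1)), w l = .one → l = i := by
        intro l hl
        have hm : l ∈ Finset.univ.filter
            (fun l : Fin (2 * (m + 1)) => (l : ℕ) < 2 * (m + 1) ∧ w l = .one) :=
          Finset.mem_filter.mpr ⟨Finset.mem_univ _, l.isLt, hl⟩
        rw [hiF] at hm
        exact Finset.mem_singleton.mp hm
      have huniq2 : ∀ l : Fin (2 * (m + 1)), w l = .onebar → l = j := by
        intro l hl
        have hm : l ∈ Finset.univ.filter
            (fun l : Fin (2 * (m + 1)) => (l : ℕ) < 2 * (m + 1) ∧ w l = .onebar) :=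
          Finset.mem_filter.mpr ⟨Finset.mem_univ _, l.isLt, hl⟩
        rw [hjF] at hm
        exact Finset.mem_singleton.mp hm
      have hij : i < j := by
        rwa [huniq1 i' hwi', huniq2 j' hwj'] at hij'
      have hab : (i : ℕ) < (j : ℕ) := hij
      have hbN : (j : ℕ) < 2 * (m + 1) := j.isLt
      have hother : ∀ l : Fin (2 * (m + 1)), l ≠ i → l ≠ j → w l = .two ∨ w l = .twobar := by
        intro l hli hlj
        cases hcase : w l with
        | one => exact absurd (huniq1 l hcase) hli
        | onebar => exact absurd (huniq2 l hcase) hlj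
        | two => exact Or.inl rfl
        | twobar => exact Or.inr rfl
      let v : Fin (2 * (m + 1) - 2) → DyckStep := fun t =>
        if w ⟨natUnidx (i : ℕ) (j : ℕ) (t : ℕ), natUnidx_lt hab hbN t.isLt⟩ = .two
          then U else D
      have hmk : mk (2 * (m + 1)) i j v = w := by
        funext l
        by_cases hli : l = i
        · subst hli; rw [mk_apply_i, hwi]
        · by_cases hlj : l = j
          · subst hlj; rw [mk_apply_j (Fin.ne_of_lt hij).symm, hwj]
          · have h1' := Fin.val_ne_of_ne hli
            have h2' := Fin.val_ne_of_ne hlj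
            have hidxlt := natIdx_lt hab hbN h1' h2' l.isLt
            rw [mk_apply_ne hli hlj hidxlt]
            have hun : (⟨natUnidx (i : ℕ) (j : ℕ) (natIdx (i : ℕ) (j : ℕ) (l : ℕ)),
                natUnidx_lt hab hbN hidxlt⟩ : Fin (2 * (m + 1))) = l :=
              Fin.ext (natUnidx_natIdx hab h1' h2')
            have hvv : v ⟨natIdx (i : ℕ) (j : ℕ) (l : ℕ), hidxlt⟩
                = if w l = .two then U else D := by
              show (if w ⟨natUnidx (i : ℕ) (j : ℕ) (natIdx (i : ℕ) (j : ℕ) (l : ℕ)),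
                natUnidx_lt hab hbN hidxlt⟩ = .two then U else D) = _
              rw [hun]
            rcases hother l hli hlj with h | h <;> rw [hvv, h] <;> simp [toG]
      have hvD : DyckCond (2 * (m + 1) - 2) v := by
        constructor
        · intro r hr
          obtain ⟨k, hk, hkr⟩ := natIdx_surj hab hbN hr
          have hgg := (hG k hk).1
          rw [← hmk, cnt_mk_twobar hij, cnt_mk_two hij, hkr] at hgg
          exact hgg
        · have hcc := hC.2
          rw [← hmk, cnt_mk_two hij, cnt_mk_twobar hij, natIdx_top hab hbN] at hcc
          exact hcc
      exact ⟨((i, j), v), Finset.mem_product.mpr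
        ⟨Finset.mem_filter.mpr ⟨Finset.mem_univ _, hij⟩,
         Finset.mem_filter.mpr ⟨Finset.mem_univ _, hvD⟩⟩, hmk⟩
  rw [← key, Finset.card_product, card_pairs (m + 1) hn,
    card_dyckCond' (2 * (m + 1) - 2) m e2, e1, e2, e3]
  calc (m + 1) * (2 * m + 1) * catalan m
      = (2 * m + 1) * ((m + 1) * catalan m) := by ring
    _ = (2 * m + 1) * Nat.centralBinom m := by rw [succ_mul_catalan_eq_centralBinom]
    _ = (2 * m + 1) * (2 * m).choose m := rfl
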